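/- Let f_1,…,f_n be functions of t and derivatives of x_1,…,x_n, let Σ be their signature matrix (σ_{ij} = highest order of derivative of x_j occurring in f_i, or -∞), let (c;d) be a valid offset pair, and let J be the System Jacobian J_{ij} = ∂f_i/∂x_j^{(d_j - c_i)} (zero when d_j - c_i > σ_{ij}). Suppose u = (u_1,…,u_n) is a nonzero vector of functions with Jᵀu = 0, and set I = {i : u_i ≢ 0}, θ = min_{i∈I} c_i. If every component of u depends on x_j only through derivatives of order < d_j - θ (for every j), then the function f̄ = Σ_{i∈I} u_i f_i^{(c_i - θ)} depends on x_j only through derivatives of order < d_j - θ, for every j = 1,…,n. -/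
import Mathlib


open MvPolynomial

/-- Differential polynomials in the formal variables `t` (= `none`) and
`x_j^{(k)}` (= `some (j, k)`), with real coefficients. -/
abbrev DPoly (n : ℕ) := MvPolynomial (Option (Fin n × ℕ)) ℝ

/-- The formal variable `x_j^{(k)}`. -/
noncomputable def Xv {n : ℕ} (j : Fin n) (k : ℕ) : DPoly n := X (some (j, k))

/-- The total time derivative operator `D`, acting by the chain rule. -/
noncomputable def Dop {n : ℕ} : DPoly n → DPoly n :=
  MvPolynomial.mkDerivation ℝ fun v : Option (Fin n × ℕ) =>
    match v with
    | none => (1 : DPoly n)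
    | some (j, k) => Xv j (k + 1)

/-- `hod w j`: the highest order of a derivative of `x_j` occurring in `w`
(`⊥` = `-∞` if `x_j` does not occur). This is the signature entry `σ_{ij}`
when `w = f i`. -/
noncomputable def hod {n : ℕ} (w : DPoly n) (j : Fin n) : WithBot ℤ :=
  w.vars.sup fun v =>
    match v with
    | some (j', k) => if j' = j then ((k : ℤ) : WithBot ℤ) else ⊥
    | none => ⊥

section Aux
variable {n : ℕ}

lemma pderiv_X' (i v : Option (Fin n × ℕ)) :
    pderiv i (X v : DPoly n) = if v = i then 1 else 0 := by
  rw [pderiv_X, Pi.single_apply]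

noncomputable def Dder (n : ℕ) : Derivation ℝ (DPoly n) (DPoly n) :=
  MvPolynomial.mkDerivation ℝ fun v : Option (Fin n × ℕ) =>
    match v with
    | none => (1 : DPoly n)
    | some (j, k) => Xv j (k + 1)

lemma Dop_eq (w : DPoly n) : Dop w = Dder n w := rfl

lemma comm_succ (j : Fin n) (k : ℕ) (w : DPoly n) :
    pderiv (some (j, k+1)) (Dop w)
      = Dop (pderiv (some (j, k+1)) w) + pderiv (some (j, k)) w := by
  have h : ⁅(pderiv (some (j,k+1)) : Derivation ℝ (DPoly n) (DPoly n)), Dder n⁆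
      = (pderiv (some (j,k)) : Derivation ℝ (DPoly n) (DPoly n)) := by
    apply derivation_ext
    intro v
    rw [Derivation.commutator_apply]
    match v with
    | none =>
      simp [Dder, mkDerivation_X, pderiv_X', pderiv_one]
    | some (j', k') =>
      have h1 : Dder n (X (some (j', k'))) = X (some (j', k'+1)) := by
        rw [Dder, mkDerivation_X]; rfl
      rw [h1, pderiv_X', pderiv_X', pderiv_X']
      have h2 : Dder n (if (some (j', k') : Option (Fin n × ℕ)) = some (j, k+1)
          then (1 : DPoly n) else 0) = 0 := by
        split <;> simp
      rw [h2, sub_zero]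
      by_cases hh : (j', k') = (j, k)
      · obtain ⟨h3, h4⟩ := Prod.mk.injEq .. ▸ hh
        simp [h3, h4]
      · rw [if_neg (by simpa using hh), if_neg (by
          simp only [Option.some.injEq, Prod.mk.injEq]
          rintro ⟨rfl, h5⟩
          exact hh (by simp [h5]))]
  have h2 := DFunLike.congr_fun h w
  rw [Derivation.commutator_apply] at h2
  rw [Dop_eq, Dop_eq]
  exact sub_eq_iff_eq_add'.mp h2

lemma comm_zero (j : Fin n) (w : DPoly n) :
    pderiv (some (j, 0)) (Dop w) = Dop (pderiv (some (j, 0)) w) := by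
  have h : ⁅(pderiv (some (j,0)) : Derivation ℝ (DPoly n) (DPoly n)), Dder n⁆
      = (0 : Derivation ℝ (DPoly n) (DPoly n)) := by
    apply derivation_ext
    intro v
    rw [Derivation.commutator_apply]
    match v with
    | none =>
      simp [Dder, mkDerivation_X, pderiv_X', pderiv_one]
    | some (j', k') =>
      have h1 : Dder n (X (some (j', k'))) = X (some (j', k'+1)) := by
        rw [Dder, mkDerivation_X]; rfl
      rw [h1, pderiv_X', pderiv_X']
      have h2 : Dder n (if (some (j', k') : Option (Fin n × ℕ)) = some (j, 0)
          then (1 : DPoly n) else 0) = 0 := by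
        split <;> simp
      rw [h2, sub_zero, if_neg (by simp)]
      simp
  have h2 := DFunLike.congr_fun h w
  rw [Derivation.commutator_apply] at h2
  rw [Dop_eq, Dop_eq]
  have h3 : (0 : Derivation ℝ (DPoly n) (DPoly n)) w = 0 := rfl
  rw [h3] at h2
  exact sub_eq_zero.mp h2

lemma Dop_zero : Dop (0 : DPoly n) = 0 := by rw [Dop_eq, map_zero]

def bddp (j : Fin n) (m : ℕ) (w : DPoly n) : Prop :=
  ∀ k, m ≤ k → pderiv (some (j, k)) w = 0

lemma bddp_Dop {j : Fin n} {m : ℕ} {w : DPoly n} (h : bddp j m w) :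
    bddp j (m+1) (Dop w) := by
  intro k hk
  obtain ⟨k, rfl⟩ : ∃ k', k = k'+1 := ⟨k-1, by omega⟩
  rw [comm_succ, h _ (by omega), h _ (by omega), Dop_zero, add_zero]

lemma bddp_Dop0 {j : Fin n} {w : DPoly n} (h : bddp j 0 w) :
    bddp j 0 (Dop w) := by
  intro k _
  cases k with
  | zero => rw [comm_zero, h 0 le_rfl, Dop_zero]
  | succ k => rw [comm_succ, h _ (by omega), h _ (by omega), Dop_zero, add_zero]

lemma bddp_iter {j : Fin n} {m : ℕ} {w : DPoly n} (h : bddp j m w) (p : ℕ) :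
    bddp j (m+p) (Dop^[p] w) := by
  induction p with
  | zero => simpa using h
  | succ p ih =>
    rw [Function.iterate_succ_apply']
    exact bddp_Dop ih

lemma bddp_iter0 {j : Fin n} {w : DPoly n} (h : bddp j 0 w) (p : ℕ) :
    bddp j 0 (Dop^[p] w) := by
  induction p with
  | zero => simpa using h
  | succ p ih =>
    rw [Function.iterate_succ_apply']
    exact bddp_Dop0 ih

lemma griewank {j : Fin n} {m : ℕ} {w : DPoly n} (h : bddp j (m+1) w) (p : ℕ) :
    pderiv (some (j, m+p)) (Dop^[p] w) = pderiv (some (j, m)) w := by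
  induction p with
  | zero => rfl
  | succ p ih =>
    rw [Function.iterate_succ_apply', show m+(p+1) = (m+p)+1 from rfl, comm_succ, ih,
        bddp_iter h p _ (by omega), Dop_zero, zero_add]

lemma le_hod {w : DPoly n} {j : Fin n} {k : ℕ} (h : some (j,k) ∈ w.vars) :
    ((k:ℤ) : WithBot ℤ) ≤ hod w j := by
  have h2 := Finset.le_sup (f := fun v : Option (Fin n × ℕ) =>
    match v with
    | some (j', k) => if j' = j then ((k : ℤ) : WithBot ℤ) else ⊥
    | none => ⊥) h
  unfold hod
  refine le_trans ?_ h2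
  change ((k:ℤ) : WithBot ℤ) ≤ (if j = j then ((k:ℤ) : WithBot ℤ) else ⊥)
  rw [if_pos rfl]

lemma pderiv_zero_of_hod_le {w : DPoly n} {j : Fin n} {z : ℤ}
    (h : hod w j ≤ (z : WithBot ℤ)) {k : ℕ} (hk : z < k) :
    pderiv (some (j,k)) w = 0 := by
  apply pderiv_eq_zero_of_notMem_vars
  intro hm
  have h2 : ((k:ℤ) : WithBot ℤ) ≤ (z : WithBot ℤ) := le_trans (le_hod hm) h
  rw [WithBot.coe_le_coe] at h2
  omega

lemma pderiv_zero_of_hod_lt {w : DPoly n} {j : Fin n} {z : ℤ}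
    (h : hod w j < (z : WithBot ℤ)) {k : ℕ} (hk : z ≤ k) :
    pderiv (some (j,k)) w = 0 := by
  apply pderiv_eq_zero_of_notMem_vars
  intro hm
  have h2 : ((k:ℤ) : WithBot ℤ) < (z : WithBot ℤ) := lt_of_le_of_lt (le_hod hm) h
  rw [WithBot.coe_lt_coe] at h2
  omega

lemma hod_lt {w : DPoly n} {j : Fin n} {z : ℤ}
    (h : ∀ k : ℕ, some (j,k) ∈ w.vars → (k:ℤ) < z) : hod w j < (z : WithBot ℤ) := by
  unfold hod
  rw [Finset.sup_lt_iff (WithBot.bot_lt_coe z)]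
  intro v hv
  obtain - | ⟨j', k⟩ := v
  · exact WithBot.bot_lt_coe z
  · by_cases hj : j' = j
    · subst hj
      change (if j' = j' then ((k : ℤ) : WithBot ℤ) else ⊥) < (z : WithBot ℤ)
      rw [if_pos rfl]
      exact WithBot.coe_lt_coe.mpr (h k hv)
    · change (if j' = j then ((k : ℤ) : WithBot ℤ) else ⊥) < (z : WithBot ℤ)
      rw [if_neg hj]
      exact WithBot.bot_lt_coe z

lemma pderiv_ne_zero_of_mem_vars {w : DPoly n} {v : Option (Fin n × ℕ)}
    (h : v ∈ w.vars) : pderiv v w ≠ 0 := by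
  rw [mem_vars] at h
  obtain ⟨m, hm, hv⟩ := h
  have hmv : m v ≠ 0 := by simpa [Finsupp.mem_support_iff] using hv
  intro h0
  have hc : coeff (m - Finsupp.single v 1) (pderiv v w) = coeff m w * (m v : ℝ) := by
    conv_lhs => rw [w.as_sum, map_sum]
    simp only [pderiv_monomial]
    rw [coeff_sum]
    simp only [coeff_monomial]
    rw [Finset.sum_eq_single m]
    · simp
    · intro m' hm' hne
      by_cases h1 : m' v = 0
      · simp [h1]
      · rw [if_neg]
        intro heq
        apply hne
        ext a
        have h3 := DFunLike.congr_fun heq a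
        rw [Finsupp.tsub_apply, Finsupp.tsub_apply] at h3
        rcases eq_or_ne a v with rfl | hav
        · simp [Finsupp.single_apply] at h3
          omega
        · simpa [Finsupp.single_apply, Ne.symm hav] using h3
    · intro h; exact absurd hm h
  rw [h0] at hc
  simp only [coeff_zero] at hc
  have := mul_ne_zero (by simpa [mem_support_iff] using hm)
    (Nat.cast_ne_zero (R := ℝ).mpr hmv)
  exact this hc.symm

end Aux

/-- The System Jacobian: `J i j = ∂f_i/∂x_j^{(d_j - c_i)}` (which is `0`
when `d j - c i > σ_{ij}`), and `0` when `d j - c i < 0`. -/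
noncomputable def sysJac {n : ℕ} (f : Fin n → DPoly n) (c d : Fin n → ℕ) :
    Matrix (Fin n) (Fin n) (DPoly n) :=
  fun i j => if c i ≤ d j then pderiv (some (j, d j - c i)) (f i) else 0

/-- **LC lemma.** Let `(c; d)` be a valid offset pair for the DAE `f = 0`
(signature entries `hod (f i) j`, with equality on a transversal `T`), let
`u ≠ 0` satisfy `Jᵀu = 0`, and let `θ = min {c i : u i ≢ 0}`. If every
component of `u` depends on `x_j` only through derivatives of order
`< d j - θ` (for every `j`), then `f̄ = ∑_{u i ≠ 0} u i · f i^{(c i - θ)}`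
depends on `x_j` only through derivatives of order `< d j - θ`, for all `j`. -/
theorem stmt5 {n : ℕ} (f u : Fin n → DPoly n) (c d : Fin n → ℕ)
    (hle : ∀ i j, hod (f i) j ≤ (((d j : ℤ) - (c i : ℤ) : ℤ) : WithBot ℤ))
    (T : Equiv.Perm (Fin n))
    (hT : ∀ i, hod (f i) (T i) = (((d (T i) : ℤ) - (c i : ℤ) : ℤ) : WithBot ℤ))
    (hu0 : u ≠ 0)
    (hker : ∀ j, ∑ i, u i * sysJac f c d i j = 0)
    (θ : ℕ)
    (hθ1 : ∀ i, u i ≠ 0 → θ ≤ c i)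
    (hθ2 : ∃ i, u i ≠ 0 ∧ c i = θ)
    (hu : ∀ i j, hod (u i) j < (((d j : ℤ) - (θ : ℤ) : ℤ) : WithBot ℤ)) :
    ∀ j, hod (∑ i, u i * Dop^[c i - θ] (f i)) j
      < (((d j : ℤ) - (θ : ℤ) : ℤ) : WithBot ℤ) := by
  intro j
  apply hod_lt (z := (d j : ℤ) - (θ : ℤ))
  intro k hk
  by_contra hlt
  push_neg at hlt
  refine pderiv_ne_zero_of_mem_vars hk ?_
  rw [map_sum]
  rcases eq_or_lt_of_le hlt with heq | hgt
  · calc ∑ i, pderiv (some (j,k)) (u i * Dop^[c i - θ] (f i))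
        = ∑ i, u i * sysJac f c d i j := by
          refine Finset.sum_congr rfl fun i _ => ?_
          rw [pderiv_mul, pderiv_zero_of_hod_lt (hu i j) hlt, zero_mul, zero_add]
          by_cases hui : u i = 0
          · simp [hui]
          · have hθc := hθ1 i hui
            by_cases hcd : c i ≤ d j
            · have hb : bddp j (d j - c i + 1) (f i) := fun k' hk' =>
                pderiv_zero_of_hod_le (hle i j) (by omega)
              have hkk : k = (d j - c i) + (c i - θ) := by omega
              rw [hkk, griewank hb]
              simp only [sysJac, if_pos hcd]
            · have hb : bddp j 0 (f i) := fun k' _ =>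
                pderiv_zero_of_hod_le (hle i j) (by omega)
              rw [bddp_iter0 hb _ _ (Nat.zero_le _)]
              simp only [sysJac, if_neg hcd, mul_zero]
      _ = 0 := hker j
  · refine Finset.sum_eq_zero fun i _ => ?_
    rw [pderiv_mul, pderiv_zero_of_hod_lt (hu i j) hlt, zero_mul, zero_add]
    by_cases hui : u i = 0
    · simp [hui]
    · have hθc := hθ1 i hui
      by_cases hcd : c i ≤ d j
      · have hb : bddp j (d j - c i + 1) (f i) := fun k' hk' =>
          pderiv_zero_of_hod_le (hle i j) (by omega)
        rw [bddp_iter hb (c i - θ) k (by omega), mul_zero]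
      · have hb : bddp j 0 (f i) := fun k' _ =>
          pderiv_zero_of_hod_le (hle i j) (by omega)
        rw [bddp_iter0 hb _ _ (Nat.zero_le _), mul_zero]
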